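/- (Comparison step in the proof of Lemma 1.) Let n ≥ 2 be an integer, let C₁ > 0 and T > 0 be real numbers, and set t₂ = min(T, 1/(2C₁)). Let F, G : ℝ → ℝ be differentiable on (0, T) with F(t) ≥ 0 for all t ∈ (0, T), F(t) → 0 and G(t) → 0 as t → 0⁺, and suppose that for all t ∈ (0, T): (n − C₁ t)·F(t) + (n − 2 − 3C₁ t)·G(t) ≤ t·F′(t) − t·G′(t). Then G(t) ≤ F(t) for all t ∈ (0, t₂). -/

import Mathlib

/-- Comparison step in the proof of Lemma 1: if `F ≥ 0`, `F, G → 0` as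
`t → 0⁺`, and `(n − C₁t)F + (n − 2 − 3C₁t)G ≤ tF′ − tG′` on `(0, T)`, then
`G ≤ F` on `(0, t₂)` where `t₂ = min(T, 1/(2C₁))`. -/
theorem lemma1_comparison_step (n : ℕ) (hn : 2 ≤ n) (C₁ T : ℝ)
    (hC₁ : 0 < C₁) (hT : 0 < T) (F G : ℝ → ℝ)
    (hF : ∀ t ∈ Set.Ioo (0 : ℝ) T, DifferentiableAt ℝ F t)
    (hG : ∀ t ∈ Set.Ioo (0 : ℝ) T, DifferentiableAt ℝ G t)
    (hFpos : ∀ t ∈ Set.Ioo (0 : ℝ) T, 0 ≤ F t)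
    (hF0 : Filter.Tendsto F (nhdsWithin 0 (Set.Ioi 0)) (nhds 0))
    (hG0 : Filter.Tendsto G (nhdsWithin 0 (Set.Ioi 0)) (nhds 0))
    (hineq : ∀ t ∈ Set.Ioo (0 : ℝ) T,
      ((n : ℝ) - C₁ * t) * F t + ((n : ℝ) - 2 - 3 * C₁ * t) * G t ≤
        t * deriv F t - t * deriv G t) :
    ∀ t ∈ Set.Ioo (0 : ℝ) (min T (1 / (2 * C₁))), G t ≤ F t := by
  have hn2 : (2 : ℝ) ≤ (n : ℝ) := by exact_mod_cast hn
  set p : ℝ := (n : ℝ) - 2 with hp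
  have hp0 : 0 ≤ p := by simp only [hp]; linarith
  set t₂ : ℝ := min T (1 / (2 * C₁)) with ht₂def
  have ht₂T : t₂ ≤ T := min_le_left _ _
  set ψ : ℝ → ℝ := fun s => s ^ p * Real.exp (-(3 * C₁ * s)) * (G s - F s) with hψ
  -- derivative computation on (0, t₂)
  have key : ∀ s ∈ Set.Ioo (0 : ℝ) t₂,
      HasDerivAt ψ (s ^ (p - 1) * Real.exp (-(3 * C₁ * s)) *
        ((p - 3 * C₁ * s) * (G s - F s) + s * (deriv G s - deriv F s))) s ∧
      s ^ (p - 1) * Real.exp (-(3 * C₁ * s)) *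
        ((p - 3 * C₁ * s) * (G s - F s) + s * (deriv G s - deriv F s)) ≤ 0 := by
    intro s hs
    have hs0 : 0 < s := hs.1
    have hsT : s ∈ Set.Ioo (0 : ℝ) T := ⟨hs0, lt_of_lt_of_le hs.2 ht₂T⟩
    have h1 : HasDerivAt (fun x : ℝ => x ^ p) (p * s ^ (p - 1)) s :=
      Real.hasDerivAt_rpow_const (Or.inl hs0.ne')
    have h2 : HasDerivAt (fun x : ℝ => Real.exp (-(3 * C₁ * x)))
        (Real.exp (-(3 * C₁ * s)) * (-(3 * C₁))) s := by
      have : HasDerivAt (fun x : ℝ => -(3 * C₁ * x)) (-(3 * C₁)) s := by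
        exact HasDerivAt.congr_deriv (f := fun x : ℝ => -(3 * C₁ * x))
          ((hasDerivAt_id s).const_mul (3 * C₁)).neg (by simp)
      exact this.exp
    have h3 : HasDerivAt (fun x => G x - F x) (deriv G s - deriv F s) s :=
      ((hG s hsT).hasDerivAt).sub ((hF s hsT).hasDerivAt)
    have hD := (h1.mul h2).mul h3
    have hsp : s ^ p = s ^ (p - 1) * s := by
      conv_lhs => rw [show p = p - 1 + 1 by ring]
      rw [Real.rpow_add_one hs0.ne']
    constructor
    · refine HasDerivAt.congr_deriv (f := ψ) hD ?_
      simp only [Pi.mul_apply]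
      rw [hsp]; ring
    · have hB : (p - 3 * C₁ * s) * (G s - F s) + s * (deriv G s - deriv F s) ≤ 0 := by
        have h4 := hineq s hsT
        have h5 : 0 ≤ F s := hFpos s hsT
        have h6 : 2 * C₁ * s < 1 := by
          have := hs.2
          have h7 : s < 1 / (2 * C₁) := lt_of_lt_of_le this (min_le_right _ _)
          have h8 : 0 < 2 * C₁ := by linarith
          calc 2 * C₁ * s < 2 * C₁ * (1 / (2 * C₁)) := by
                exact mul_lt_mul_of_pos_left h7 h8
            _ = 1 := by field_simp
        have h9 : 0 ≤ (2 * (n : ℝ) - 2 - 4 * C₁ * s) * F s := by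
          apply mul_nonneg _ h5
          nlinarith
        simp only [hp] at *
        nlinarith [h4, h9]
      apply mul_nonpos_of_nonneg_of_nonpos _ hB
      positivity
  -- ψ is antitone on (0, t₂)
  have hanti : AntitoneOn ψ (Set.Ioo 0 t₂) := by
    apply antitoneOn_of_deriv_nonpos (convex_Ioo _ _)
    · intro x hx
      exact ((key x hx).1.differentiableAt).continuousAt.continuousWithinAt
    · intro x hx
      rw [interior_Ioo] at hx
      exact ((key x hx).1.differentiableAt).differentiableWithinAt
    · intro x hx
      rw [interior_Ioo] at hx
      rw [(key x hx).1.deriv]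
      exact (key x hx).2
  -- ψ tends to 0 at 0⁺
  have hψ0 : Filter.Tendsto ψ (nhdsWithin 0 (Set.Ioi 0)) (nhds 0) := by
    have hc : Filter.Tendsto (fun s : ℝ => s ^ p * Real.exp (-(3 * C₁ * s)))
        (nhdsWithin 0 (Set.Ioi 0)) (nhds ((0 : ℝ) ^ p * Real.exp (-(3 * C₁ * 0)))) := by
      apply Filter.Tendsto.mono_left _ nhdsWithin_le_nhds
      exact ((Real.continuousAt_rpow_const 0 p (Or.inr hp0)).mul
        (((continuous_const.mul continuous_id).neg).rexp.continuousAt)).tendsto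
    have := hc.mul (hG0.sub hF0)
    simpa using this
  intro t ht
  have hψt : ψ t ≤ 0 := by
    have hev : ∀ᶠ s in nhdsWithin 0 (Set.Ioi 0), ψ t ≤ ψ s := by
      filter_upwards [Ioo_mem_nhdsGT_of_mem (Set.mem_Ico.2 ⟨le_refl 0, ht.1⟩)] with s hs
      exact hanti ⟨hs.1, lt_trans hs.2 ht.2⟩ ht (le_of_lt hs.2)
    exact ge_of_tendsto hψ0 hev
  have hA : 0 < t ^ p * Real.exp (-(3 * C₁ * t)) :=
    mul_pos (Real.rpow_pos_of_pos ht.1 p) (Real.exp_pos _)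
  simp only [hψ] at hψt
  nlinarith [hψt, hA]
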